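/- Suppose I : ℝ³ → ℝ satisfies I(S,K,c) > 0 and C_BS(S, K, I(S,K,c)) = c for all (S,K,c) ∈ D_I, and define f(K) := I(eK, K, (e−1)K + eK²) for 0 < K < 1/e (this is well-defined since (e−1)K < (e−1)K + eK² < eK there). Then F(√T · f(K)) = K for all 0 < K < 1/e; equivalently, f(K) = F^{-1}(K)/√T, where F^{-1} : (0,1/e) → (0,∞) is the inverse of F. -/

import Mathlib

open Real Set Filter Topology MeasureTheory intervalIntegral

/-- Standard normal cdf. -/
noncomputable def stdNormalCDF (x : ℝ) : ℝ :=
  ∫ t in Set.Iio x, Real.exp (-t ^ 2 / 2) / Real.sqrt (2 * Real.pi)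

/-- Black–Scholes call price with maturity `T`. -/
noncomputable def C_BS (T S K σ : ℝ) : ℝ :=
  S * stdNormalCDF (Real.log (S / K) / (σ * Real.sqrt T) + σ * Real.sqrt T / 2) -
  K * stdNormalCDF (Real.log (S / K) / (σ * Real.sqrt T) - σ * Real.sqrt T / 2)

/-- Standard normal density. -/
noncomputable def stdNormalPDF (x : ℝ) : ℝ :=
  Real.exp (-x ^ 2 / 2) / Real.sqrt (2 * Real.pi)

/-- `F x = ∫_0^x φ(1/v + v/2) dv`. -/
noncomputable def F (x : ℝ) : ℝ :=
  ∫ v in (0 : ℝ)..x, stdNormalPDF (1 / v + v / 2)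

/-- The domain of the implied volatility function. -/
def D_I : Set (Fin 3 → ℝ) :=
  {x | 0 < x 0 ∧ 0 < x 1 ∧ max (x 0 - x 1) 0 < x 2 ∧ x 2 < x 0}

lemma pdf_pos (x : ℝ) : 0 < stdNormalPDF x :=
  div_pos (Real.exp_pos _) (Real.sqrt_pos.mpr (by positivity))
lemma pdf_cont : Continuous stdNormalPDF := by
  unfold stdNormalPDF; fun_prop
lemma pdf_le (x : ℝ) : stdNormalPDF x ≤ (Real.sqrt (2 * Real.pi))⁻¹ := by
  unfold stdNormalPDF
  rw [div_eq_mul_inv]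
  have h2 : (0:ℝ) < Real.sqrt (2 * Real.pi) := Real.sqrt_pos.mpr (by positivity)
  nlinarith [Real.exp_le_one_iff.mpr (by nlinarith [sq_nonneg x] : -x^2/2 ≤ 0), (Real.exp_pos (-x^2/2)).le,
    inv_pos.mpr h2]
lemma pdf_integrable : Integrable stdNormalPDF := by
  have h := integrable_exp_neg_mul_sq (b := (1:ℝ)/2) (by norm_num)
  have : stdNormalPDF = fun t => Real.exp (-(1/2) * t ^ 2) * (Real.sqrt (2 * Real.pi))⁻¹ := by
    funext t; unfold stdNormalPDF; rw [div_eq_mul_inv]; ring_nf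
  rw [this]
  exact h.mul_const _
lemma pdf_total : ∫ x, stdNormalPDF x = 1 := by
  have h := integral_gaussian (1/2 : ℝ)
  have hs : Real.sqrt ((Real.pi) / (1/2)) = Real.sqrt (2 * Real.pi) := by norm_num [mul_comm]
  have : ∫ x, stdNormalPDF x = (∫ x : ℝ, Real.exp (-(1/2) * x ^ 2)) / Real.sqrt (2 * Real.pi) := by
    rw [← MeasureTheory.integral_div]; congr 1; funext t; unfold stdNormalPDF; ring_nf
  rw [this, h, hs, div_self]
  exact (Real.sqrt_pos.mpr (by positivity)).ne'
lemma cdf_eq_Iic (x : ℝ) : stdNormalCDF x = ∫ t in Iic x, stdNormalPDF t := by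
  unfold stdNormalCDF stdNormalPDF
  exact (MeasureTheory.integral_Iic_eq_integral_Iio).symm
lemma cdf_sub (a b : ℝ) : stdNormalCDF b - stdNormalCDF a = ∫ t in a..b, stdNormalPDF t := by
  rw [cdf_eq_Iic, cdf_eq_Iic]
  exact integral_Iic_sub_Iic pdf_integrable.integrableOn pdf_integrable.integrableOn
lemma cdf_hasDerivAt (x : ℝ) : HasDerivAt stdNormalCDF (stdNormalPDF x) x := by
  have heq : stdNormalCDF = fun y => stdNormalCDF 0 + ∫ t in (0:ℝ)..y, stdNormalPDF t := by
    funext y; rw [← cdf_sub]; ring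
  rw [heq]
  exact ((intervalIntegral.integral_hasDerivAt_right
    pdf_integrable.intervalIntegrable
    (pdf_cont.stronglyMeasurableAtFilter _ _)
    pdf_cont.continuousAt)).const_add _
lemma cdf_tendsto_one : Tendsto stdNormalCDF atTop (𝓝 1) := by
  have h1 : Tendsto (fun x : ℝ => ∫ t in (0:ℝ)..x, stdNormalPDF t) atTop
      (𝓝 (∫ t in Ioi (0:ℝ), stdNormalPDF t)) :=
    MeasureTheory.intervalIntegral_tendsto_integral_Ioi 0 pdf_integrable.integrableOn tendsto_id
  have heq : ∀ x, stdNormalCDF x = stdNormalCDF 0 + ∫ t in (0:ℝ)..x, stdNormalPDF t := by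
    intro x; rw [← cdf_sub]; ring
  have htot : stdNormalCDF 0 + ∫ t in Ioi (0:ℝ), stdNormalPDF t = 1 := by
    rw [cdf_eq_Iic, integral_Iic_add_Ioi pdf_integrable.integrableOn
      pdf_integrable.integrableOn, pdf_total]
  have := (tendsto_const_nhds (x := stdNormalCDF 0) (f := atTop (α := ℝ))).add h1
  rw [htot] at this
  exact this.congr (fun x => (heq x).symm)
lemma psi_meas : Measurable (fun v : ℝ => stdNormalPDF (1 / v + v / 2)) := by
  apply pdf_cont.measurable.comp
  exact ((measurable_const.div measurable_id).add (measurable_id.div_const 2))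
lemma psi_intervalIntegrable (a b : ℝ) :
    IntervalIntegrable (fun v : ℝ => stdNormalPDF (1 / v + v / 2)) volume a b := by
  rw [intervalIntegrable_iff]
  apply Measure.integrableOn_of_bounded (measure_Ioc_lt_top).ne
    psi_meas.aestronglyMeasurable
  filter_upwards with x
  rw [Real.norm_eq_abs, abs_of_pos (pdf_pos _)]
  exact pdf_le _
lemma F_sub (a b : ℝ) : F b - F a = ∫ v in a..b, stdNormalPDF (1 / v + v / 2) := by
  unfold F
  exact integral_interval_sub_left (psi_intervalIntegrable 0 b) (psi_intervalIntegrable 0 a)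
lemma F_strictMono : StrictMono F := by
  intro a b hab
  have h : 0 < ∫ v in a..b, stdNormalPDF (1 / v + v / 2) :=
    intervalIntegral.intervalIntegral_pos_of_pos_on (psi_intervalIntegrable a b)
      (fun x _ => pdf_pos _) hab
  rw [← F_sub] at h; linarith
lemma F_hasDerivAt {s : ℝ} (hs : 0 < s) :
    HasDerivAt F (stdNormalPDF (1 / s + s / 2)) s := by
  apply intervalIntegral.integral_hasDerivAt_right (psi_intervalIntegrable 0 s)
    ⟨Set.univ, univ_mem, psi_meas.aestronglyMeasurable.restrict⟩
  exact pdf_cont.continuousAt.comp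
    (((continuousAt_const.div continuousAt_id hs.ne').add ((continuousAt_id).div_const 2)))
lemma F_tendsto_zero : Tendsto F (𝓝[>] (0:ℝ)) (𝓝 0) := by
  have hb : Tendsto (fun a : ℝ => (Real.sqrt (2 * Real.pi))⁻¹ * |a|) (𝓝[>] (0:ℝ)) (𝓝 0) := by
    have : Tendsto (fun a : ℝ => (Real.sqrt (2 * Real.pi))⁻¹ * |a|) (𝓝 0)
        (𝓝 ((Real.sqrt (2 * Real.pi))⁻¹ * |0|)) :=
      (continuous_const.mul continuous_abs).tendsto 0
    simpa using this.mono_left nhdsWithin_le_nhds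
  refine squeeze_zero_norm (fun a => ?_) hb
  have := intervalIntegral.norm_integral_le_of_norm_le_const
    (C := (Real.sqrt (2 * Real.pi))⁻¹)
    (f := fun v : ℝ => stdNormalPDF (1 / v + v / 2)) (a := (0:ℝ)) (b := a) ?_
  · simpa [F, mul_comm] using this
  · intro x _
    rw [Real.norm_eq_abs, abs_of_pos (pdf_pos _)]; exact pdf_le _
lemma pdf_relation {u : ℝ} (hu : u ≠ 0) :
    Real.exp (-1) * stdNormalPDF (1 / u - u / 2) = stdNormalPDF (1 / u + u / 2) := by
  have h : Real.exp (-1) * Real.exp (-(1 / u - u / 2) ^ 2 / 2)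
      = Real.exp (-(1 / u + u / 2) ^ 2 / 2) := by
    rw [← Real.exp_add]
    congr 1
    field_simp
    ring
  unfold stdNormalPDF
  rw [← mul_div_assoc, h]
lemma g_hasDerivAt {u : ℝ} (hu : 0 < u) :
    HasDerivAt (fun v => stdNormalCDF (1 / v + v / 2) -
      Real.exp (-1) * stdNormalCDF (1 / v - v / 2) - F v) 0 u := by
  have hinv : HasDerivAt (fun v : ℝ => 1 / v) (-(1 / u ^ 2)) u := by
    simpa [one_div] using (hasDerivAt_inv hu.ne')
  have h1 : HasDerivAt (fun v : ℝ => 1 / v + v / 2) (-(1 / u ^ 2) + 1 / 2) u :=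
    hinv.add ((hasDerivAt_id u).div_const 2)
  have h2 : HasDerivAt (fun v : ℝ => 1 / v - v / 2) (-(1 / u ^ 2) - 1 / 2) u :=
    hinv.sub ((hasDerivAt_id u).div_const 2)
  have hc1 := (cdf_hasDerivAt (1 / u + u / 2)).comp u h1
  have hc2 := ((cdf_hasDerivAt (1 / u - u / 2)).comp u h2).const_mul (Real.exp (-1))
  simp only [Function.comp_def] at hc1 hc2
  have h := (hc1.sub hc2).sub (F_hasDerivAt hu)
  have hkey := pdf_relation hu.ne'
  convert h using 1
  · rfl
  · rfl
  · rfl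
  rw [show Real.exp (-1) * (stdNormalPDF (1 / u - u / 2) * (-(1 / u ^ 2) - 1 / 2)) =
    (Real.exp (-1) * stdNormalPDF (1 / u - u / 2)) * (-(1 / u ^ 2) - 1 / 2) by ring, hkey]
  ring
lemma key_identity {s : ℝ} (hs : 0 < s) :
    stdNormalCDF (1 / s + s / 2) - Real.exp (-1) * stdNormalCDF (1 / s - s / 2)
      = 1 - Real.exp (-1) + F s := by
  set g : ℝ → ℝ := fun v => stdNormalCDF (1 / v + v / 2) -
    Real.exp (-1) * stdNormalCDF (1 / v - v / 2) - F v with hgdef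
  have hconst : ∀ a : ℝ, 0 < a → g a = g s := by
    intro a ha
    have h0 : ∀ x ∈ Set.uIcc a s, HasDerivAt g ((fun _ => (0:ℝ)) x) x := by
      intro x hx
      exact g_hasDerivAt (lt_of_lt_of_le (lt_min ha hs) hx.1)
    have := intervalIntegral.integral_eq_sub_of_hasDerivAt h0
      (_root_.intervalIntegrable_const (c := (0:ℝ)))
    simp only [intervalIntegral.integral_zero] at this
    linarith [this]
  have hinv : Tendsto (fun a : ℝ => 1 / a) (𝓝[>] (0:ℝ)) atTop := by
    simpa [one_div] using tendsto_inv_nhdsGT_zero (𝕜 := ℝ)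
  have hhalf : Tendsto (fun a : ℝ => a / 2) (𝓝[>] (0:ℝ)) (𝓝 0) := by
    have : Tendsto (fun a : ℝ => a / 2) (𝓝 (0:ℝ)) (𝓝 ((0:ℝ) / 2)) :=
      (continuous_id.div_const 2).tendsto 0
    simpa using this.mono_left nhdsWithin_le_nhds
  have ht1 : Tendsto (fun a : ℝ => 1 / a + a / 2) (𝓝[>] (0:ℝ)) atTop := hinv.atTop_add hhalf
  have ht2 : Tendsto (fun a : ℝ => 1 / a - a / 2) (𝓝[>] (0:ℝ)) atTop := by
    have := hinv.atTop_add hhalf.neg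
    simpa [sub_eq_add_neg] using this
  have hN1 : Tendsto (fun a : ℝ => stdNormalCDF (1 / a + a / 2)) (𝓝[>] (0:ℝ)) (𝓝 1) :=
    cdf_tendsto_one.comp ht1
  have hN2 : Tendsto (fun a : ℝ => stdNormalCDF (1 / a - a / 2)) (𝓝[>] (0:ℝ)) (𝓝 1) :=
    cdf_tendsto_one.comp ht2
  have hg_tendsto : Tendsto g (𝓝[>] (0:ℝ)) (𝓝 (1 - Real.exp (-1))) := by
    have h := (hN1.sub (hN2.const_mul (Real.exp (-1)))).sub F_tendsto_zero
    rw [hgdef]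
    simpa using h
  have hconst_tendsto : Tendsto g (𝓝[>] (0:ℝ)) (𝓝 (g s)) := by
    refine Tendsto.congr' ?_ (tendsto_const_nhds (x := g s))
    filter_upwards [self_mem_nhdsWithin] with a ha
    exact (hconst a ha).symm
  have : g s = 1 - Real.exp (-1) := tendsto_nhds_unique hconst_tendsto hg_tendsto
  rw [hgdef] at this
  simp only at this
  linarith [this]

/-- The specialization `f(K) = I(eK, K, (e−1)K + eK²)` satisfies
`F(√T·f(K)) = K`, i.e. `f(K) = F⁻¹(K)/√T`, for `0 < K < 1/e`. -/
theorem implied_vol_specialization (T : ℝ) (hT : 0 < T)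
    (I : (Fin 3 → ℝ) → ℝ)
    (hIpos : ∀ x ∈ D_I, 0 < I x)
    (hI : ∀ x ∈ D_I, C_BS T (x 0) (x 1) (I x) = x 2)
    (f : ℝ → ℝ)
    (hf : ∀ K : ℝ, f K = I ![Real.exp 1 * K, K,
      (Real.exp 1 - 1) * K + Real.exp 1 * K ^ 2]) :
    ∀ K ∈ Set.Ioo (0 : ℝ) (1 / Real.exp 1),
      F (Real.sqrt T * f K) = K ∧
      ∀ G : ℝ → ℝ,
        (∀ y ∈ Set.Ioo (0 : ℝ) (1 / Real.exp 1), 0 < G y ∧ F (G y) = y) →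
        f K = G K / Real.sqrt T := by
  intro K hK
  obtain ⟨hK0, hKe⟩ := hK
  have he1 : (1:ℝ) < Real.exp 1 := by
    have := Real.exp_lt_exp.mpr (show (0:ℝ) < 1 by norm_num)
    simpa using this
  have hepos : (0:ℝ) < Real.exp 1 := by linarith
  have heK : Real.exp 1 * K < 1 := by
    have := (lt_div_iff₀ hepos).mp hKe
    linarith [this]
  set x : Fin 3 → ℝ := ![Real.exp 1 * K, K, (Real.exp 1 - 1) * K + Real.exp 1 * K ^ 2]
    with hxdef
  have hx0 : x 0 = Real.exp 1 * K := rfl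
  have hx1 : x 1 = K := rfl
  have hx2 : x 2 = (Real.exp 1 - 1) * K + Real.exp 1 * K ^ 2 := rfl
  have hxD : x ∈ D_I := by
    refine ⟨by rw [hx0]; positivity, by rw [hx1]; exact hK0, ?_, ?_⟩
    · rw [hx0, hx1, hx2]
      have hmax : max (Real.exp 1 * K - K) 0 = (Real.exp 1 - 1) * K := by
        rw [max_eq_left (by nlinarith : (0:ℝ) ≤ Real.exp 1 * K - K)]; ring
      rw [hmax]
      nlinarith
    · rw [hx0, hx2]
      nlinarith
  have hσ : 0 < I x := hIpos x hxD
  have hsT : 0 < Real.sqrt T := Real.sqrt_pos.mpr hT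
  set s : ℝ := I x * Real.sqrt T with hsdef
  have hs : 0 < s := mul_pos hσ hsT
  have hBS := hI x hxD
  unfold C_BS at hBS
  rw [hx0, hx1, hx2] at hBS
  have hlog : Real.log (Real.exp 1 * K / K) = 1 := by
    rw [mul_div_assoc, div_self hK0.ne', mul_one, Real.log_exp]
  rw [hlog] at hBS
  rw [← hsdef] at hBS
  have hkey := key_identity hs
  have hee : Real.exp 1 * Real.exp (-1) = 1 := by
    rw [← Real.exp_add]; norm_num
  have h2 : Real.exp 1 * K * F s = Real.exp 1 * K * K := by
    linear_combination hBS - (Real.exp 1 * K) * hkey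
      - (K * (stdNormalCDF (1 / s - s / 2) - 1)) * hee
  have hFsK : F s = K := mul_left_cancel₀ (by positivity) h2
  have hfK : f K = I x := by rw [hf K]
  have hmain : F (Real.sqrt T * f K) = K := by
    rw [hfK, mul_comm, ← hsdef, hFsK]
  refine ⟨hmain, ?_⟩
  intro G hG
  obtain ⟨hGpos, hGF⟩ := hG K ⟨hK0, hKe⟩
  have heq : Real.sqrt T * f K = G K :=
    F_strictMono.injective (by rw [hmain, hGF])
  rw [eq_div_iff hsT.ne']
  linarith [heq, mul_comm (Real.sqrt T) (f K)]
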